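/- arXiv:1204.1989 — 8 statements merged into one kernel-verified Lean document; each statement's English description precedes it below -/
import Mathlib

section
/- Every induced subgraph (with at least two vertices) of a P4-free graph contains a pair of twin vertices; conversely, if every induced subgraph with at least two vertices of a graph G contains a pair of twins, then G is P4-free. -/
open SimpleGraph

/-- The four distinct vertices `a, b, c, d` induce the path `a-b-c-d` in `G`. -/
def IsInducedP4 {V : Type*} (G : SimpleGraph V) (a b c d : V) : Prop :=
  a ≠ b ∧ a ≠ c ∧ a ≠ d ∧ b ≠ c ∧ b ≠ d ∧ c ≠ d ∧
  G.Adj a b ∧ G.Adj b c ∧ G.Adj c d ∧ ¬ G.Adj a c ∧ ¬ G.Adj a d ∧ ¬ G.Adj b d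

/-- `G` is `P₄`-free (a cograph): no four vertices induce a path. -/
def P4Free {V : Type*} (G : SimpleGraph V) : Prop :=
  ¬ ∃ a b c d : V, IsInducedP4 G a b c d

/-- `x` and `y` are twin vertices of `G`: they have the same neighbours
outside of each other. -/
def Twins {V : Type*} (G : SimpleGraph V) (x y : V) : Prop :=
  x ≠ y ∧ ∀ z : V, z ≠ x → z ≠ y → (G.Adj x z ↔ G.Adj y z)

section Aux

variable {V : Type*}

/-- The restriction of `G` to a vertex set `S`, as a graph on the same vertex type. -/
def restrict (G : SimpleGraph V) (S : Set V) : SimpleGraph V where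
  Adj x y := G.Adj x y ∧ x ∈ S ∧ y ∈ S
  symm := ⟨fun x y ⟨h, h1, h2⟩ => ⟨h.symm, h2, h1⟩⟩
  loopless := ⟨fun x ⟨h, _, _⟩ => G.loopless.irrefl x h⟩

lemma restrict_adj {G : SimpleGraph V} {S : Set V} {x y : V} :
    (restrict G S).Adj x y ↔ G.Adj x y ∧ x ∈ S ∧ y ∈ S := Iff.rfl

lemma reachable_eq_of_isolated {H : SimpleGraph V} {v w : V}
    (hiso : ∀ z, ¬H.Adj v z) (hr : H.Reachable v w) : v = w := by
  obtain ⟨p⟩ := hr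
  cases p with
  | nil => rfl
  | cons h _ => exact absurd h (hiso _)

lemma exists_adj_of_walk {H : SimpleGraph V} :
    ∀ {u v : V}, H.Walk u v → ∀ (R : Set V),
      (∀ x y, x ∈ R → y ≠ v → H.Adj x y → y ∈ R) → v ∉ R → u ∈ R →
      ∃ x ∈ R, H.Adj x v := by
  intro u v w
  induction w with
  | nil => exact fun _ _ hv hu => absurd hu hv
  | @cons a b c h p ih =>
    intro R hcl hv hu
    by_cases hb : b = c
    · exact ⟨a, hu, hb ▸ h⟩
    · exact ih R hcl hv (hcl a b hu hb h)

lemma walk_prop {H : SimpleGraph V} (P : V → Prop) :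
    ∀ {x u : V}, H.Walk x u → P x → ¬P u →
      ∃ a b, H.Adj a b ∧ P a ∧ ¬P b ∧ H.Reachable b u := by
  intro x u w
  induction w with
  | nil => exact fun h1 h2 => absurd h1 h2
  | @cons a b c h p ih =>
    intro h1 h2
    by_cases hb : P b
    · exact ih hb h2
    · exact ⟨a, b, h, h1, hb, ⟨p⟩⟩

lemma P4Free.compl {G : SimpleGraph V} (h : P4Free G) : P4Free Gᶜ := by
  rintro ⟨a, b, c, d, n1, n2, n3, n4, n5, n6, e1, e2, e3, f1, f2, f3⟩
  rw [compl_adj] at e1 e2 e3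
  have g1 : G.Adj a c := by
    by_contra hh; exact f1 (compl_adj G a c |>.mpr ⟨n2, hh⟩)
  have g2 : G.Adj a d := by
    by_contra hh; exact f2 (compl_adj G a d |>.mpr ⟨n3, hh⟩)
  have g3 : G.Adj b d := by
    by_contra hh; exact f3 (compl_adj G b d |>.mpr ⟨n5, hh⟩)
  exact h ⟨c, a, d, b, n2.symm, n6, n4.symm, n3, n1, n5.symm,
    g1.symm, g2, g3.symm, fun hh => e3.2 hh, fun hh => e2.2 hh.symm, fun hh => e1.2 hh⟩

/-- The key step in Seinsche's theorem: if `G` restricted to `S \ {v}` is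
disconnected (witnessed by `a, b`), then `G` or `Gᶜ` is disconnected on `S`. -/
lemma seinsche_step {G : SimpleGraph V} (hP4 : P4Free G) {S : Set V} {v a b : V}
    (hv : v ∈ S) (ha : a ∈ S \ {v}) (hb : b ∈ S \ {v})
    (hnr : ¬(restrict G (S \ {v})).Reachable a b) :
    (∃ a b, a ∈ S ∧ b ∈ S ∧ ¬(restrict G S).Reachable a b) ∨
    (∃ a b, a ∈ S ∧ b ∈ S ∧ ¬(restrict Gᶜ S).Reachable a b) := by
  by_contra hcon
  push_neg at hcon
  obtain ⟨hcon1, hcon2⟩ := hcon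
  -- `v` is adjacent to every other vertex of `S`
  have dom : ∀ u ∈ S, u ≠ v → G.Adj v u := by
    intro u huS huv
    by_contra hvu
    set G'' := restrict G (S \ {v}) with hG''
    set R : Set V := {x ∈ S \ {v} | G''.Reachable u x} with hR
    have hu' : u ∈ S \ {v} := ⟨huS, huv⟩
    have huR : u ∈ R := ⟨hu', Reachable.refl u⟩
    have hvR : v ∉ R := fun h => h.1.2 rfl
    have closure : ∀ x y, x ∈ R → y ≠ v → (restrict G S).Adj x y → y ∈ R := by
      rintro x y hx hyv ⟨hadj, hxS, hyS⟩
      exact ⟨⟨hyS, hyv⟩, hx.2.trans (Adj.reachable ⟨hadj, hx.1, ⟨hyS, hyv⟩⟩)⟩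
    obtain ⟨w1⟩ := hcon1 u v huS hv
    obtain ⟨x₀, hx₀R, hx₀v⟩ := exists_adj_of_walk w1 R closure hvR huR
    have hvx₀ : G.Adj v x₀ := hx₀v.1.symm
    obtain ⟨w2⟩ := hx₀R.2.symm
    obtain ⟨x', y', hxy', hPx', hPy', hy'u⟩ :=
      walk_prop (fun z => G.Adj v z) w2 hvx₀ hvu
    have hx'm : x' ∈ S \ {v} := hxy'.2.1
    have hy'm : y' ∈ S \ {v} := hxy'.2.2
    have hux' : G''.Reachable u x' := hy'u.symm.trans hxy'.symm.reachable
    have huy' : G''.Reachable u y' := hy'u.symm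
    -- a vertex `c` in a different component of `G''` than `u`
    obtain ⟨c, hc, hcu⟩ : ∃ c, c ∈ S \ {v} ∧ ¬G''.Reachable u c := by
      by_cases hra : G''.Reachable u a
      · exact ⟨b, hb, fun h => hnr (hra.symm.trans h)⟩
      · exact ⟨a, ha, hra⟩
    set Cc : Set V := {x ∈ S \ {v} | G''.Reachable c x} with hCc
    have hcC : c ∈ Cc := ⟨hc, Reachable.refl c⟩
    have hvC : v ∉ Cc := fun h => h.1.2 rfl
    have closure' : ∀ x y, x ∈ Cc → y ≠ v → (restrict G S).Adj x y → y ∈ Cc := by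
      rintro x y hx hyv ⟨hadj, hxS, hyS⟩
      exact ⟨⟨hyS, hyv⟩, hx.2.trans (Adj.reachable ⟨hadj, hx.1, ⟨hyS, hyv⟩⟩)⟩
    obtain ⟨w3⟩ := hcon1 c v hc.1 hv
    obtain ⟨w0, hw0C, hw0v⟩ := exists_adj_of_walk w3 Cc closure' hvC hcC
    have cross : ∀ t, t ∈ S \ {v} → G''.Reachable u t → w0 ≠ t ∧ ¬G.Adj w0 t := by
      intro t ht hres
      constructor
      · rintro rfl
        exact hcu (hres.trans hw0C.2.symm)
      · intro hadj
        have : G''.Adj w0 t := ⟨hadj, hw0C.1, ht⟩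
        exact hcu ((hres.trans this.symm.reachable).trans hw0C.2.symm)
    obtain ⟨hwx1, hwx2⟩ := cross x' hx'm hux'
    obtain ⟨hwy1, hwy2⟩ := cross y' hy'm huy'
    exact hP4 ⟨w0, v, x', y',
      hw0v.1.ne, hwx1, hwy1, hPx'.ne, fun h => hy'm.2 h.symm, hxy'.1.ne,
      hw0v.1, hPx', hxy'.1, hwx2, hwy2, hPy'⟩
  -- hence `v` is isolated in `Gᶜ` restricted to `S`, contradicting connectivity
  have hiso : ∀ z, ¬(restrict Gᶜ S).Adj v z := by
    rintro z ⟨hadj, _, hzS⟩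
    rcases eq_or_ne z v with rfl | hzv
    · exact Gᶜ.loopless.irrefl z hadj
    · exact (compl_adj G v z).mp hadj |>.2 (dom z hzS hzv)
  have := reachable_eq_of_isolated hiso (hcon2 v a hv ha.1)
  exact ha.2 this.symm

/-- Seinsche's theorem, set-restricted form: on any set of size `≥ 2`,
a `P₄`-free graph or its complement is disconnected. -/
lemma seinsche : ∀ (n : ℕ) (G : SimpleGraph V) (S : Set V), S.ncard = n → 2 ≤ n →
    P4Free G →
    (∃ a b, a ∈ S ∧ b ∈ S ∧ ¬(restrict G S).Reachable a b) ∨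
    (∃ a b, a ∈ S ∧ b ∈ S ∧ ¬(restrict Gᶜ S).Reachable a b) := by
  intro n
  induction n using Nat.strong_induction_on with
  | _ n IH =>
    intro G S hS hn hP4
    rcases eq_or_lt_of_le hn with hn2 | hn3
    · -- |S| = 2
      obtain ⟨a, b, hab, rfl⟩ := Set.ncard_eq_two.mp (hS.trans hn2.symm)
      have haS : a ∈ ({a, b} : Set V) := Set.mem_insert a {b}
      have hbS : b ∈ ({a, b} : Set V) := Set.mem_insert_iff.mpr (Or.inr rfl)
      by_cases hadj : G.Adj a b
      · right
        refine ⟨a, b, haS, hbS, fun hr => ?_⟩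
        refine hab (reachable_eq_of_isolated ?_ hr)
        rintro z ⟨hGc, _, hzS⟩
        rcases hzS with rfl | hzb
        · exact Gᶜ.loopless.irrefl z hGc
        · rw [Set.mem_singleton_iff] at hzb
          subst hzb
          exact (compl_adj G a z).mp hGc |>.2 hadj
      · left
        refine ⟨a, b, haS, hbS, fun hr => ?_⟩
        refine hab (reachable_eq_of_isolated ?_ hr)
        rintro z ⟨hG, _, hzS⟩
        rcases hzS with rfl | hzb
        · exact G.loopless.irrefl z hG
        · rw [Set.mem_singleton_iff] at hzb
          subst hzb
          exact hadj hG
    · -- |S| ≥ 3 : remove a vertex and use the induction hypothesis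
      have hfin : S.Finite := Set.finite_of_ncard_ne_zero (by omega)
      obtain ⟨v, hv⟩ := Set.nonempty_of_ncard_ne_zero (by omega : S.ncard ≠ 0)
      have hS' : (S \ {v}).ncard = n - 1 := by
        rw [Set.ncard_diff_singleton_of_mem hv, hS]
      have h2 : 2 ≤ n - 1 := by omega
      have hlt : n - 1 < n := by omega
      rcases IH (n - 1) hlt G (S \ {v}) hS' h2 hP4 with ⟨a, b, ha, hb, hnr⟩ | ⟨a, b, ha, hb, hnr⟩
      · exact seinsche_step hP4 hv ha hb hnr
      · have := seinsche_step hP4.compl hv ha hb hnr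
        rw [compl_compl] at this
        exact this.symm

/-- Twins within a set, stated over the ambient type. -/
def TwinsIn (G : SimpleGraph V) (S : Set V) : Prop :=
  ∃ x y, x ∈ S ∧ y ∈ S ∧ x ≠ y ∧
    ∀ z ∈ S, z ≠ x → z ≠ y → (G.Adj x z ↔ G.Adj y z)

lemma main_twins : ∀ (n : ℕ) (G : SimpleGraph V) (S : Set V), S.ncard = n → 2 ≤ n →
    P4Free G → TwinsIn G S := by
  intro n
  induction n using Nat.strong_induction_on with
  | _ n IH =>
    intro G S hS hn hP4
    have hfin : S.Finite := Set.finite_of_ncard_ne_zero (by omega)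
    -- component-growing step
    have grow : ∀ (G : SimpleGraph V), P4Free G → ∀ c d u, c ∈ S → d ∈ S → u ∈ S →
        ¬(restrict G S).Reachable c d → u ≠ c → (restrict G S).Reachable c u →
        TwinsIn G S := by
      intro G hP4 c d u hc hd hu hnr huc hreach
      set C : Set V := {x ∈ S | (restrict G S).Reachable c x} with hC
      have hcC : c ∈ C := ⟨hc, Reachable.refl c⟩
      have huC : u ∈ C := ⟨hu, hreach⟩
      have hdC : d ∉ C := fun h => hnr h.2
      have hCS : C ⊆ S := fun x hx => hx.1
      have hCfin : C.Finite := hfin.subset hCS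
      have hpair : ({c, u} : Set V) ⊆ C := by
        rintro x (rfl | hx)
        · exact hcC
        · rw [Set.mem_singleton_iff] at hx; subst hx; exact huC
      have h2C : 2 ≤ C.ncard := by
        have := Set.ncard_le_ncard hpair hCfin
        rwa [Set.ncard_pair (Ne.symm huc)] at this
      have hlt : C.ncard < n := by
        rw [← hS]
        exact Set.ncard_lt_ncard ⟨hCS, fun h => hdC (h hd)⟩ hfin
      obtain ⟨x, y, hx, hy, hxy, htw⟩ := IH C.ncard hlt G C rfl h2C hP4
      refine ⟨x, y, hCS hx, hCS hy, hxy, ?_⟩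
      intro z hz hzx hzy
      by_cases hzC : z ∈ C
      · exact htw z hzC hzx hzy
      · constructor
        · intro h
          exact absurd ⟨hz, hx.2.trans (Adj.reachable ⟨h, hCS hx, hz⟩)⟩ hzC
        · intro h
          exact absurd ⟨hz, hy.2.trans (Adj.reachable ⟨h, hCS hy, hz⟩)⟩ hzC
    -- main case split
    by_cases hex : ∃ a b, a ∈ S ∧ b ∈ S ∧ ¬(restrict G S).Reachable a b
    · obtain ⟨a, b, ha, hb, hnr⟩ := hex
      have hab : a ≠ b := fun h => hnr (h ▸ Reachable.refl a)
      by_cases h1 : ∃ u ∈ S, u ≠ a ∧ (restrict G S).Reachable a u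
      · obtain ⟨u, hu, hua, hr⟩ := h1
        exact grow G hP4 a b u ha hb hu hnr hua hr
      · by_cases h2 : ∃ u ∈ S, u ≠ b ∧ (restrict G S).Reachable b u
        · obtain ⟨u, hu, hub, hr⟩ := h2
          exact grow G hP4 b a u hb ha hu (fun h => hnr h.symm) hub hr
        · push_neg at h1 h2
          refine ⟨a, b, ha, hb, hab, ?_⟩
          intro z hz hza hzb
          constructor
          · intro h
            exact absurd ((restrict_adj.mpr ⟨h, ha, hz⟩ :
              (restrict G S).Adj a z).reachable) (h1 z hz hza)
          · intro h
            exact absurd ((restrict_adj.mpr ⟨h, hb, hz⟩ :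
              (restrict G S).Adj b z).reachable) (h2 z hz hzb)
    · by_cases hex2 : ∃ a b, a ∈ S ∧ b ∈ S ∧ ¬(restrict Gᶜ S).Reachable a b
      · obtain ⟨a, b, ha, hb, hnr⟩ := hex2
        have hab : a ≠ b := fun h => hnr (h ▸ Reachable.refl a)
        have hcompl : TwinsIn Gᶜ S := by
          by_cases h1 : ∃ u ∈ S, u ≠ a ∧ (restrict Gᶜ S).Reachable a u
          · obtain ⟨u, hu, hua, hr⟩ := h1
            exact grow Gᶜ hP4.compl a b u ha hb hu hnr hua hr
          · by_cases h2 : ∃ u ∈ S, u ≠ b ∧ (restrict Gᶜ S).Reachable b u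
            · obtain ⟨u, hu, hub, hr⟩ := h2
              exact grow Gᶜ hP4.compl b a u hb ha hu (fun h => hnr h.symm) hub hr
            · push_neg at h1 h2
              refine ⟨a, b, ha, hb, hab, ?_⟩
              intro z hz hza hzb
              constructor
              · intro h
                exact absurd ((restrict_adj.mpr ⟨h, ha, hz⟩ :
                  (restrict Gᶜ S).Adj a z).reachable) (h1 z hz hza)
              · intro h
                exact absurd ((restrict_adj.mpr ⟨h, hb, hz⟩ :
                  (restrict Gᶜ S).Adj b z).reachable) (h2 z hz hzb)
        obtain ⟨x, y, hx, hy, hxy, htw⟩ := hcompl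
        refine ⟨x, y, hx, hy, hxy, ?_⟩
        intro z hz hzx hzy
        have := htw z hz hzx hzy
        rw [compl_adj, compl_adj] at this
        constructor
        · intro h
          by_contra hne
          exact ((this.mpr ⟨Ne.symm hzy, hne⟩).2) h
        · intro h
          by_contra hne
          exact ((this.mp ⟨Ne.symm hzx, hne⟩).2) h
      · exact absurd (seinsche n G S hS hn hP4) (by
          rintro (h | h)
          · exact hex h
          · exact hex2 h)

end Aux

/-- A finite graph is `P₄`-free iff every induced subgraph with at least two
vertices contains a pair of twins. -/
theorem statement0 {V : Type*} [Fintype V] (G : SimpleGraph V) :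
    P4Free G ↔
      ∀ S : Set V, 2 ≤ S.ncard → ∃ x y : S, Twins (G.induce S) x y := by
  constructor
  · intro hP4 S hS2
    obtain ⟨x, y, hx, hy, hxy, htw⟩ := main_twins S.ncard G S rfl hS2 hP4
    refine ⟨⟨x, hx⟩, ⟨y, hy⟩, fun h => hxy (congrArg Subtype.val h), ?_⟩
    intro z hz1 hz2
    have hz1' : (z : V) ≠ x := fun h => hz1 (Subtype.ext h)
    have hz2' : (z : V) ≠ y := fun h => hz2 (Subtype.ext h)
    exact htw z z.2 hz1' hz2'
  · intro h
    rintro ⟨a, b, c, d, n1, n2, n3, n4, n5, n6, e1, e2, e3, f1, f2, f3⟩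
    set S : Set V := {a, b, c, d} with hSdef
    have haS : a ∈ S := by simp [hSdef]
    have hbS : b ∈ S := by simp [hSdef]
    have hcS : c ∈ S := by simp [hSdef]
    have hdS : d ∈ S := by simp [hSdef]
    have hS2 : 2 ≤ S.ncard := by
      have hsub : ({a, b} : Set V) ⊆ S := by
        rintro x (rfl | hx)
        · exact haS
        · rw [Set.mem_singleton_iff] at hx; subst hx; exact hbS
      have := Set.ncard_le_ncard hsub (Set.toFinite S)
      rwa [Set.ncard_pair n1] at this
    obtain ⟨x, y, hxy, htw⟩ := h S hS2
    have key : ∀ (p q r : V), r ∈ S →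
        (x : V) = p → (y : V) = q → r ≠ p → r ≠ q →
        ¬(G.Adj p r ↔ G.Adj q r) → False := by
      intro p q r hr hxp hyq hrp hrq hniff
      have h1 : (⟨r, hr⟩ : S) ≠ x := fun hh => hrp (by
        rw [← hxp]; exact congrArg Subtype.val hh)
      have h2 : (⟨r, hr⟩ : S) ≠ y := fun hh => hrq (by
        rw [← hyq]; exact congrArg Subtype.val hh)
      have h3 := htw ⟨r, hr⟩ h1 h2
      refine hniff ?_
      simpa [comap_adj, hxp, hyq] using h3
    have hxy' : (x : V) ≠ (y : V) := fun hh => hxy (Subtype.ext hh)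
    have hxm := x.2
    have hym := y.2
    simp only [hSdef, Set.mem_insert_iff, Set.mem_singleton_iff] at hxm hym
    rcases hxm with hx' | hx' | hx' | hx' <;> rcases hym with hy' | hy' | hy' | hy'
    · exact hxy' (hx'.trans hy'.symm)
    · exact key a b c hcS hx' hy' (Ne.symm n2) (Ne.symm n4)
        (fun hiff => f1 (hiff.mpr e2))
    · exact key a c d hdS hx' hy' (Ne.symm n3) (Ne.symm n6)
        (fun hiff => f2 (hiff.mpr e3))
    · exact key a d b hbS hx' hy' (Ne.symm n1) n5
        (fun hiff => f3 (hiff.mp e1).symm)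
    · exact key b a c hcS hx' hy' (Ne.symm n4) (Ne.symm n2)
        (fun hiff => f1 (hiff.mp e2))
    · exact hxy' (hx'.trans hy'.symm)
    · exact key b c a haS hx' hy' n1 n2
        (fun hiff => f1 (hiff.mp e1.symm).symm)
    · exact key b d a haS hx' hy' n1 n3
        (fun hiff => f2 (hiff.mp e1.symm).symm)
    · exact key c a d hdS hx' hy' (Ne.symm n6) (Ne.symm n3)
        (fun hiff => f2 (hiff.mp e3))
    · exact key c b a haS hx' hy' n2 n1
        (fun hiff => f1 (hiff.mpr e1.symm).symm)
    · exact hxy' (hx'.trans hy'.symm)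
    · exact key c d b hbS hx' hy' n4 n5
        (fun hiff => f3 (hiff.mp e2.symm).symm)
    · exact key d a b hbS hx' hy' n5 (Ne.symm n1)
        (fun hiff => f3 (hiff.mpr e1).symm)
    · exact key d b a haS hx' hy' n3 n1
        (fun hiff => f2 (hiff.mpr e1.symm).symm)
    · exact key d c b hbS hx' hy' n5 n4
        (fun hiff => f3 (hiff.mpr e2.symm).symm)
    · exact hxy' (hx'.trans hy'.symm)
end

section
/- Let σ be a permutation of {1,...,n} with σ(1)=1, and define a graph H on {2,...,n} by joining x and y (with x<y) whenever σ(x)>σ(y). If H contains a pair of twin vertices x<y, then for every w with x ≤ w ≤ y (in the linear order), σ(w) lies between min(σ(x),σ(y)) and max(σ(x),σ(y)). -/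
/-- Adjacency in the inversion graph of the permutation `σ`: `x` and `y` are
adjacent iff they form an inversion. -/
def invAdj (n : ℕ) (σ : Equiv.Perm (Fin n)) (x y : Fin n) : Prop :=
  (x < y ∧ σ y < σ x) ∨ (y < x ∧ σ x < σ y)

/-- Twins in the inversion graph (restricted to the nonzero indices, for a
permutation fixing `0`) map intervals to intervals: if `x < y` are twins, then for
every `w` with `x ≤ w ≤ y`, `σ w` lies between `min (σ x) (σ y)` and
`max (σ x) (σ y)`. -/
theorem statement2 (n : ℕ) [NeZero n] (σ : Equiv.Perm (Fin n)) (h0 : σ 0 = 0)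
    (x y : Fin n) (hx : x ≠ 0) (hy : y ≠ 0) (hxy : x < y)
    (htwin : ∀ z : Fin n, z ≠ 0 → z ≠ x → z ≠ y →
      (invAdj n σ x z ↔ invAdj n σ y z)) :
    ∀ w : Fin n, x ≤ w → w ≤ y →
      min (σ x) (σ y) ≤ σ w ∧ σ w ≤ max (σ x) (σ y) := by
  intro w hxw hwy
  rcases eq_or_lt_of_le hxw with rfl | hxw'
  · exact ⟨min_le_left _ _, le_max_left _ _⟩
  rcases eq_or_lt_of_le hwy with rfl | hwy'
  · exact ⟨min_le_right _ _, le_max_right _ _⟩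
  have hw0 : w ≠ 0 := by
    rintro rfl
    exact absurd hxw' (not_lt.mpr (Fin.zero_le x))
  have htw := htwin w hw0 hxw'.ne' hwy'.ne
  constructor
  · by_contra h
    push_neg at h
    have h1 : σ w < σ x := lt_of_lt_of_le h (min_le_left _ _)
    have h2 : σ w < σ y := lt_of_lt_of_le h (min_le_right _ _)
    have : invAdj n σ y w := htw.mp (Or.inl ⟨hxw', h1⟩)
    rcases this with ⟨hlt, _⟩ | ⟨_, hlt⟩
    · exact absurd hwy' (not_lt.mpr hlt.le)
    · exact absurd h2 (not_lt.mpr hlt.le)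
  · by_contra h
    push_neg at h
    have h1 : σ x < σ w := lt_of_le_of_lt (le_max_left _ _) h
    have h2 : σ y < σ w := lt_of_le_of_lt (le_max_right _ _) h
    have : invAdj n σ x w := htw.mpr (Or.inr ⟨hwy', h2⟩)
    rcases this with ⟨_, hlt⟩ | ⟨hlt, _⟩
    · exact absurd h1 (not_lt.mpr hlt.le)
    · exact absurd hxw' (not_lt.mpr hlt.le)
end

section
/- Let (G,M) be a marked permutation graph with cycle vertex sets A and A', and let a, b ∈ A. Then for all x, y ∈ A \ {a,b}: (i) a is adjacent to x in H_b if and only if b is adjacent to x in H_a; (ii) x is adjacent to y in H_b if and only if the number of edges among {bx, by, xy} present in H_a is odd (i.e., 1 or 3). -/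
open SimpleGraph

universe u

/-- The Petersen graph as the Kneser graph on 2-element subsets of a 5-element set. -/
def petersen : SimpleGraph {s : Finset (Fin 5) // s.card = 2} where
  Adj a b := a ≠ b ∧ Disjoint a.1 b.1
  symm := by
    refine ⟨fun a b h => ?_⟩
    exact ⟨h.1.symm, h.2.symm⟩
  loopless := by
    refine ⟨fun a h => ?_⟩
    exact h.1 rfl

/-- `H` is a subdivision of `K`: branch vertices are given by an injective map `f`, and
each edge of `K` corresponds to a path in `H`; these paths are internally disjoint,
their internal vertices are not branch vertices, and they cover all vertices and
edges of `H`. -/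
def IsSubdivisionOf {V : Type*} {W : Type*} (H : SimpleGraph V) (K : SimpleGraph W) : Prop :=
  ∃ (f : W → V) (P : ∀ ⦃u v : W⦄, K.Adj u v → H.Walk (f u) (f v)),
    Function.Injective f ∧
    (∀ ⦃u v⦄ (h : K.Adj u v), (P h).IsPath) ∧
    (∀ ⦃u v⦄ (h : K.Adj u v), P h.symm = (P h).reverse) ∧
    (∀ ⦃u v⦄ (h : K.Adj u v) ⦃u' v'⦄ (h' : K.Adj u' v'), s(u,v) ≠ s(u',v') →
      ∀ x, x ∈ (P h).support → x ∈ (P h').support → x = f u ∨ x = f v) ∧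
    (∀ ⦃u v⦄ (h : K.Adj u v) (w : W), f w ∈ (P h).support → w = u ∨ w = v) ∧
    (∀ x : V, ∃ (u v : W) (h : K.Adj u v), x ∈ (P h).support) ∧
    (∀ e : Sym2 V, e ∈ H.edgeSet ↔ ∃ (u v : W) (h : K.Adj u v), e ∈ (P h).edges)

/-- A marked permutation graph: a cubic graph `G` with a perfect matching `M`
(the distinguished matching) such that `G − E(M)` is the disjoint union of two
chordless cycles, with vertex sets `A` and `A'`.  The map `f` sends each vertex
to its friend, i.e. its partner in `M`. -/
structure MarkedPermGraph (V : Type u) [Fintype V] where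
  G : SimpleGraph V
  M : G.Subgraph
  pm : M.IsPerfectMatching
  f : V → V
  f_adj : ∀ v, M.Adj v (f v)
  cubic : ∀ v : V, {u | G.Adj v u}.ncard = 3
  A : Set V
  A' : Set V
  disj : Disjoint A A'
  cover : A ∪ A' = Set.univ
  A_nonempty : A.Nonempty
  A'_nonempty : A'.Nonempty
  twoReg : ∀ v : V, {u | (G.deleteEdges M.edgeSet).Adj v u}.ncard = 2
  compA : ∀ x ∈ A, ∀ y, (G.deleteEdges M.edgeSet).Reachable x y ↔ y ∈ A
  compA' : ∀ x ∈ A', ∀ y, (G.deleteEdges M.edgeSet).Reachable x y ↔ y ∈ A'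
  chordless : ∀ x y, M.Adj x y → (x ∈ A ↔ y ∈ A')

/-- `S` is the set of matching edges of an `M`-copy of the Petersen graph: five edges
of `M` such that the two cycles of `G − E(M)` together with `S` form a subdivision
of the Petersen graph. -/
def MP10 {V : Type u} [Fintype V] (P : MarkedPermGraph V) (S : Set (Sym2 V)) : Prop :=
  S ⊆ P.M.edgeSet ∧ S.ncard = 5 ∧
    IsSubdivisionOf (P.G.deleteEdges (P.M.edgeSet \ S)) petersen

/-- The 4-cycle `a-b-c-d-a` is an `M`-copy of `C₄`: the edges `ab` and `cd` belong
to the distinguished matching `M` and `bc`, `da` are edges of `G`. -/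
def IsMC4 {V : Type u} [Fintype V] (P : MarkedPermGraph V) (a b c d : V) : Prop :=
  P.M.Adj a b ∧ P.M.Adj c d ∧ P.G.Adj b c ∧ P.G.Adj d a ∧ s(a,b) ≠ s(c,d)

/-- `α` is a cyclic enumeration of the vertex set `A` of a cycle of the graph `G`. -/
def IsCycleEnum {V : Type u} (G : SimpleGraph V) (A : Set V) {m : ℕ} [NeZero m]
    (α : Fin m → V) : Prop :=
  Function.Injective α ∧ Set.range α = A ∧ ∀ i : Fin m, G.Adj (α i) (α (i + 1))

/-- Adjacency in the auxiliary graph `H_a`, where the cycles on `A` and `A'` are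
enumerated by `α` (starting at `a`) and `β` (starting at the friend `a'` of `a`):
two vertices `x` and `y` of `A \ {a}` are adjacent iff the cyclic order on `A` is
`a,x,y` while the cyclic order of their friends on `A'` is `a',y',x'` (i.e. the
matching chords `xx'` and `yy'` cross in the standard drawing). -/
def auxAdj {V : Type u} {m m' : ℕ} (f : V → V) (α : Fin m → V) (β : Fin m' → V)
    (x y : V) : Prop :=
  ∃ (i j : Fin m) (k l : Fin m'), x = α i ∧ y = α j ∧ f x = β k ∧ f y = β l ∧
    ((i < j ∧ l < k) ∨ (j < i ∧ k < l))

/-- Exactly one or all three of the propositions `p`, `q`, `r` hold, i.e. an odd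
number of them. -/
def OddCount (p q r : Prop) : Prop :=
  (p ∧ q ∧ r) ∨ (p ∧ ¬q ∧ ¬r) ∨ (¬p ∧ q ∧ ¬r) ∨ (¬p ∧ ¬q ∧ r)

lemma sub_val_char {m : ℕ} [NeZero m] (i s : Fin m) :
    (i - s).val + s.val = i.val ∨ (i - s).val + s.val = i.val + m := by
  have h : (i - s) + s = i := sub_add_cancel i s
  have h2 : ((i - s).val + s.val) % m = i.val := by
    rw [← Fin.val_add, h]
  have b1 := (i - s).isLt
  have b2 := s.isLt
  have b3 := i.isLt
  rcases Nat.lt_or_ge ((i - s).val + s.val) m with hlt | hge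
  · left; rwa [Nat.mod_eq_of_lt hlt] at h2
  · right
    have hlt2 : (i - s).val + s.val - m < m := by omega
    rw [Nat.mod_eq_sub_mod hge, Nat.mod_eq_of_lt hlt2] at h2
    omega

lemma part1_arith {m m' : ℕ} [NeZero m] [NeZero m'] (s i : Fin m) (t k : Fin m')
    (his : i.val ≠ s.val) (hi0 : i.val ≠ 0) (hs0 : s.val ≠ 0)
    (hkt : k.val ≠ t.val) (hk0 : k.val ≠ 0) (ht0 : t.val ≠ 0) :
    ((0 - s < i - s ∧ k - t < 0 - t) ∨ (i - s < 0 - s ∧ 0 - t < k - t)) ↔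
      ((s < i ∧ k < t) ∨ (i < s ∧ t < k)) := by
  have c1 := sub_val_char i s
  have c2 := sub_val_char (0 : Fin m) s
  have c4 := sub_val_char k t
  have c5 := sub_val_char (0 : Fin m') t
  have z1 : (0 : Fin m).val = 0 := Fin.val_zero m
  have z2 : (0 : Fin m').val = 0 := Fin.val_zero m'
  rw [z1] at c2; rw [z2] at c5
  have b1 := (i - s).isLt
  have b2 := ((0 : Fin m) - s).isLt
  have b4 := (k - t).isLt
  have b5 := ((0 : Fin m') - t).isLt
  have b7 := i.isLt
  have b9 := s.isLt
  have b10 := k.isLt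
  have b12 := t.isLt
  simp only [Fin.lt_def]
  omega

set_option maxHeartbeats 2000000 in
lemma part2_arith {m m' : ℕ} [NeZero m] [NeZero m'] (s i j : Fin m) (t k l : Fin m')
    (his : i.val ≠ s.val) (hjs : j.val ≠ s.val) (hij : i.val ≠ j.val)
    (hkt : k.val ≠ t.val) (hlt : l.val ≠ t.val) (hkl : k.val ≠ l.val) :
    ((i - s < j - s ∧ l - t < k - t) ∨ (j - s < i - s ∧ k - t < l - t)) ↔
      ((((s < i ∧ k < t) ∨ (i < s ∧ t < k)) ∧ ((s < j ∧ l < t) ∨ (j < s ∧ t < l)) ∧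
          ((i < j ∧ l < k) ∨ (j < i ∧ k < l))) ∨
        (((s < i ∧ k < t) ∨ (i < s ∧ t < k)) ∧ ¬((s < j ∧ l < t) ∨ (j < s ∧ t < l)) ∧
          ¬((i < j ∧ l < k) ∨ (j < i ∧ k < l))) ∨
        (¬((s < i ∧ k < t) ∨ (i < s ∧ t < k)) ∧ ((s < j ∧ l < t) ∨ (j < s ∧ t < l)) ∧
          ¬((i < j ∧ l < k) ∨ (j < i ∧ k < l))) ∨
        (¬((s < i ∧ k < t) ∨ (i < s ∧ t < k)) ∧ ¬((s < j ∧ l < t) ∨ (j < s ∧ t < l)) ∧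
          ((i < j ∧ l < k) ∨ (j < i ∧ k < l)))) := by
  have c1 := sub_val_char i s
  have c3 := sub_val_char j s
  have c4 := sub_val_char k t
  have c6 := sub_val_char l t
  have b1 := (i - s).isLt
  have b3 := (j - s).isLt
  have b4 := (k - t).isLt
  have b6 := (l - t).isLt
  have b7 := i.isLt
  have b8 := j.isLt
  have b9 := s.isLt
  have b10 := k.isLt
  have b11 := l.isLt
  have b12 := t.isLt
  simp only [Fin.lt_def]
  rcases c1 with c1 | c1 <;> rcases c3 with c3 | c3 <;>
    rcases c4 with c4 | c4 <;> rcases c6 with c6 | c6 <;> omega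


lemma mpg_f_inj {V : Type u} [Fintype V] (P : MarkedPermGraph V) :
    Function.Injective P.f := by
  intro u v h
  have hu := P.f_adj u
  have hv := P.f_adj v
  rw [h] at hu
  have hm := P.pm.1 (P.pm.2 (P.f v))
  exact hm.unique hu.symm hv.symm

lemma auxAdj_iff {V : Type u} {m m' : ℕ} (f : V → V) (α : Fin m → V) (β : Fin m' → V)
    (hαinj : Function.Injective α) (hβinj : Function.Injective β)
    {u w : V} {iu iw : Fin m} {ku kw : Fin m'}
    (hu : α iu = u) (hw : α iw = w) (hku : β ku = f u) (hkw : β kw = f w) :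
    auxAdj f α β u w ↔ ((iu < iw ∧ kw < ku) ∨ (iw < iu ∧ ku < kw)) := by
  constructor
  · rintro ⟨i, j, k, l, h1, h2, h3, h4, h5⟩
    have e1 : iu = i := hαinj (hu.trans h1)
    have e2 : iw = j := hαinj (hw.trans h2)
    have e3 : ku = k := hβinj (hku.trans h3)
    have e4 : kw = l := hβinj (hkw.trans h4)
    rw [e1, e2, e3, e4]; exact h5
  · intro h
    exact ⟨iu, iw, ku, kw, hu.symm, hw.symm, hku.symm, hkw.symm, h⟩

set_option maxHeartbeats 1600000 in
/-- Redrawing lemma: for anchors `a, b` on the cycle `A` (with `H_b` defined from the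
enumerations obtained by rotating those of `H_a`), (i) `ax ∈ H_b` iff `bx ∈ H_a`,
and (ii) `xy ∈ H_b` iff an odd number (1 or 3) of the edges `bx, by, xy` lie in
`H_a`. -/
theorem statement8 {V : Type u} [Fintype V] (P : MarkedPermGraph V)
    {m m' : ℕ} [NeZero m] [NeZero m']
    (α αb : Fin m → V) (β βb : Fin m' → V) (a b : V)
    (ha : a ∈ P.A) (hb : b ∈ P.A) (hab : a ≠ b)
    (hα : IsCycleEnum (P.G.deleteEdges P.M.edgeSet) P.A α) (hα0 : α 0 = a)
    (hβ : IsCycleEnum (P.G.deleteEdges P.M.edgeSet) P.A' β) (hβ0 : β 0 = P.f a)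
    (hαb0 : αb 0 = b) (hβb0 : βb 0 = P.f b)
    (hrotα : ∃ s : Fin m, ∀ i, αb i = α (i + s))
    (hrotβ : ∃ s : Fin m', ∀ i, βb i = β (i + s))
    (x y : V) (hx : x ∈ P.A \ ({a, b} : Set V)) (hy : y ∈ P.A \ ({a, b} : Set V))
    (hxy : x ≠ y) :
    (auxAdj P.f αb βb a x ↔ auxAdj P.f α β b x) ∧
    (auxAdj P.f αb βb x y ↔
      OddCount (auxAdj P.f α β b x) (auxAdj P.f α β b y) (auxAdj P.f α β x y)) := by
  obtain ⟨hαinj, hαrange, -⟩ := hα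
  obtain ⟨hβinj, hβrange, -⟩ := hβ
  obtain ⟨s, hs⟩ := hrotα
  obtain ⟨t, ht⟩ := hrotβ
  have hαbinj : Function.Injective αb := by
    intro p q h
    rw [hs p, hs q] at h
    exact add_right_cancel (hαinj h)
  have hβbinj : Function.Injective βb := by
    intro p q h
    rw [ht p, ht q] at h
    exact add_right_cancel (hβinj h)
  have hbs : α s = b := by rw [← hαb0, hs 0, zero_add]
  have hbt : β t = P.f b := by rw [← hβb0, ht 0, zero_add]
  -- indices on the A-side
  obtain ⟨i, hi⟩ : x ∈ Set.range α := by rw [hαrange]; exact hx.1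
  obtain ⟨j, hj⟩ : y ∈ Set.range α := by rw [hαrange]; exact hy.1
  -- friends lie in A'
  have hfx : P.f x ∈ Set.range β := by
    rw [hβrange]; exact (P.chordless x (P.f x) (P.f_adj x)).mp hx.1
  have hfy : P.f y ∈ Set.range β := by
    rw [hβrange]; exact (P.chordless y (P.f y) (P.f_adj y)).mp hy.1
  obtain ⟨k, hk⟩ := hfx
  obtain ⟨l, hl⟩ := hfy
  -- indices with respect to the rotated enumerations
  have hsubα : ∀ (p : Fin m) (v : V), α p = v → αb (p - s) = v := by
    intro p v hv; rw [hs, sub_add_cancel, hv]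
  have hsubβ : ∀ (p : Fin m') (v : V), β p = v → βb (p - t) = v := by
    intro p v hv; rw [ht, sub_add_cancel, hv]
  -- distinctness of the various vertices
  have hxa : x ≠ a := fun h => hx.2 (by simp [h])
  have hxb : x ≠ b := fun h => hx.2 (by simp [h])
  have hya : y ≠ a := fun h => hy.2 (by simp [h])
  have hyb : y ≠ b := fun h => hy.2 (by simp [h])
  have finj := mpg_f_inj P
  -- distinctness of the indices, in `val` form
  have val_ne : ∀ {n : ℕ} (p q : Fin n), p ≠ q → p.val ≠ q.val :=
    fun p q h => Fin.val_injective.ne h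
  have ne_of_α : ∀ (p q : Fin m) (v w : V), α p = v → α q = w → v ≠ w → p.val ≠ q.val := by
    intro p q v w hv hw hvw
    exact val_ne p q (fun h => hvw (by rw [← hv, ← hw, h]))
  have ne_of_β : ∀ (p q : Fin m') (v w : V), β p = v → β q = w → v ≠ w → p.val ≠ q.val := by
    intro p q v w hv hw hvw
    exact val_ne p q (fun h => hvw (by rw [← hv, ← hw, h]))
  have his : i.val ≠ s.val := ne_of_α i s x b hi hbs hxb
  have hi0 : i.val ≠ (0 : Fin m).val := ne_of_α i 0 x a hi hα0 hxa
  have hjs : j.val ≠ s.val := ne_of_α j s y b hj hbs hyb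
  have hij : i.val ≠ j.val := ne_of_α i j x y hi hj hxy
  have hs0 : s.val ≠ (0 : Fin m).val := ne_of_α s 0 b a hbs hα0 (Ne.symm hab)
  have hkt : k.val ≠ t.val := ne_of_β k t (P.f x) (P.f b) hk hbt (fun h => hxb (finj h))
  have hk0 : k.val ≠ (0 : Fin m').val := ne_of_β k 0 (P.f x) (P.f a) hk hβ0 (fun h => hxa (finj h))
  have hlt' : l.val ≠ t.val := ne_of_β l t (P.f y) (P.f b) hl hbt (fun h => hyb (finj h))
  have hkl : k.val ≠ l.val := ne_of_β k l (P.f x) (P.f y) hk hl (fun h => hxy (finj h))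
  have ht0 : t.val ≠ (0 : Fin m').val := ne_of_β t 0 (P.f b) (P.f a) hbt hβ0
    (fun h => hab (finj h).symm)
  -- characterizations
  have H1 : auxAdj P.f αb βb a x ↔
      ((0 - s < i - s ∧ k - t < 0 - t) ∨ (i - s < 0 - s ∧ 0 - t < k - t)) :=
    auxAdj_iff P.f αb βb hαbinj hβbinj (hsubα 0 a hα0) (hsubα i x hi)
      (hsubβ 0 (P.f a) hβ0) (hsubβ k (P.f x) hk)
  have H2 : auxAdj P.f α β b x ↔ ((s < i ∧ k < t) ∨ (i < s ∧ t < k)) :=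
    auxAdj_iff P.f α β hαinj hβinj hbs hi hbt hk
  have H3 : auxAdj P.f αb βb x y ↔
      ((i - s < j - s ∧ l - t < k - t) ∨ (j - s < i - s ∧ k - t < l - t)) :=
    auxAdj_iff P.f αb βb hαbinj hβbinj (hsubα i x hi) (hsubα j y hj)
      (hsubβ k (P.f x) hk) (hsubβ l (P.f y) hl)
  have H4 : auxAdj P.f α β b y ↔ ((s < j ∧ l < t) ∨ (j < s ∧ t < l)) :=
    auxAdj_iff P.f α β hαinj hβinj hbs hj hbt hl
  have H5 : auxAdj P.f α β x y ↔ ((i < j ∧ l < k) ∨ (j < i ∧ k < l)) :=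
    auxAdj_iff P.f α β hαinj hβinj hi hj hk hl
  simp only [Fin.val_zero] at hi0 hs0 hk0 ht0
  constructor
  · rw [H1, H2]
    exact part1_arith s i t k his hi0 hs0 hkt hk0 ht0
  · rw [H3, H2, H4, H5]
    unfold OddCount
    exact part2_arith s i j t k l his hjs hij hkt hlt' hkl
end

section
/- Let σ be a permutation of {0,1,...,n-1} viewed as relating two cyclic orders, and for each anchor a define H_a as the graph on the remaining indices where x,y are adjacent iff the chords x-σ(x) and y-σ(y) cross when the cyclic orders are cut at a and σ(a). Then for anchors a, b and indices x, y distinct from a, b: xy ∈ H_b if and only if |{bx, by, xy} ∩ E(H_a)| ∈ {1,3}. -/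
lemma subValCases {n : ℕ} (u c : Fin n) :
    (c.val ≤ u.val ∧ (u - c).val = u.val - c.val) ∨
    (u.val < c.val ∧ (u - c).val = u.val + n - c.val) := by
  have hu := u.isLt
  have hc := c.isLt
  have h : (u - c).val = (n - c.val + u.val) % n := by rw [Fin.sub_def]
  rcases le_or_gt c.val u.val with hle | hlt
  · left
    refine ⟨hle, ?_⟩
    rw [h, show n - c.val + u.val = (u.val - c.val) + n by omega,
      Nat.add_mod_right, Nat.mod_eq_of_lt (by omega)]
  · right
    refine ⟨hlt, ?_⟩
    rw [h, Nat.mod_eq_of_lt (by omega)]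
    omega

lemma cmp_shift {n : ℕ} (a b x y : Fin n) (hxa : x ≠ a) (hya : y ≠ a)
    (hba : b ≠ a) (hxb : x ≠ b) (hyb : y ≠ b) (hxy : x ≠ y) :
    (x - b < y - b) ↔
      ((x - a < y - a) ↔ ((x - a < b - a) ↔ (y - a < b - a))) := by
  have h1 := subValCases x a
  have h2 := subValCases y a
  have h3 := subValCases b a
  have h4 := subValCases x b
  have h5 := subValCases y b
  have e1 : x.val ≠ a.val := by simpa [Fin.val_inj] using hxa
  have e2 : y.val ≠ a.val := by simpa [Fin.val_inj] using hya
  have e3 : b.val ≠ a.val := by simpa [Fin.val_inj] using hba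
  have e4 : x.val ≠ b.val := by simpa [Fin.val_inj] using hxb
  have e5 : y.val ≠ b.val := by simpa [Fin.val_inj] using hyb
  have e6 : x.val ≠ y.val := by simpa [Fin.val_inj] using hxy
  simp only [Fin.lt_def]
  omega

lemma lt_flip {n : ℕ} {u v : Fin n} (h : u ≠ v) : v < u ↔ ¬(u < v) := by
  have : u.val ≠ v.val := by simpa [Fin.val_inj] using h
  simp only [Fin.lt_def]
  omega

lemma sub_ne {n : ℕ} {u v c : Fin n} (h : u ≠ v) : u - c ≠ v - c := by
  intro h'
  have h1 := subValCases u c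
  have h2 := subValCases v c
  have huv : u.val ≠ v.val := by simpa [Fin.val_inj] using h
  have := congrArg Fin.val h'
  omega

/-- The chords `x-σ(x)` and `y-σ(y)` cross relative to the anchor `a`: cutting the
two cyclic orders at `a` and `σ a` (via cyclic subtraction), `x` precedes `y` while
`σ y` precedes `σ x`, or vice versa. -/
def crossAdj (n : ℕ) (σ : Equiv.Perm (Fin n)) (a x y : Fin n) : Prop :=
  (x - a < y - a ∧ σ y - σ a < σ x - σ a) ∨
  (y - a < x - a ∧ σ x - σ a < σ y - σ a)

set_option maxHeartbeats 2000000 in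
/-- Redrawing lemma, combinatorial version: for anchors `a`, `b` and indices
`x`, `y` distinct from them, `xy ∈ H_b` iff an odd number (1 or 3) of the edges
`bx`, `by`, `xy` lie in `H_a`. -/
theorem statement9 (n : ℕ) (σ : Equiv.Perm (Fin n)) (a b x y : Fin n)
    (hab : a ≠ b) (hxa : x ≠ a) (hxb : x ≠ b) (hya : y ≠ a) (hyb : y ≠ b)
    (hxy : x ≠ y) :
    crossAdj n σ b x y ↔
      OddCount (crossAdj n σ a b x) (crossAdj n σ a b y) (crossAdj n σ a x y) := by
  have sinj := σ.injective
  have k1 := cmp_shift a b x y hxa hya hab.symm hxb hyb hxy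
  have k2 := cmp_shift (σ a) (σ b) (σ x) (σ y)
    (fun h => hxa (sinj h)) (fun h => hya (sinj h)) (fun h => hab.symm (sinj h))
    (fun h => hxb (sinj h)) (fun h => hyb (sinj h)) (fun h => hxy (sinj h))
  have f1 := lt_flip (sub_ne (c := a) hxy)
  have f2 := lt_flip (sub_ne (c := σ a) (fun h => hxy (sinj h) : σ x ≠ σ y))
  have f3 := lt_flip (sub_ne (c := b) hxy)
  have f4 := lt_flip (sub_ne (c := σ b) (fun h => hxy (sinj h) : σ x ≠ σ y))
  have f5 := lt_flip (sub_ne (c := a) hxb.symm)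
  have f6 := lt_flip (sub_ne (c := σ a) (fun h => hxb.symm (sinj h) : σ b ≠ σ x))
  have f7 := lt_flip (sub_ne (c := a) hyb.symm)
  have f8 := lt_flip (sub_ne (c := σ a) (fun h => hyb.symm (sinj h) : σ b ≠ σ y))
  simp only [crossAdj, OddCount]
  rw [f1, f2, f3, f4, f5, f6, f7, f8, k1, k2]
  simp only [Fin.lt_def]
  omega
end

section
/- Let H be a graph and b a vertex of H such that no induced 4-vertex path of H contains b. Let U1 = N_H(b) and U2 = V(H) \ (U1 ∪ {b}). Then: (i) if x,y ∈ U1 with xy ∉ E(H) and z ∈ U2, then xz ∈ E(H) iff yz ∈ E(H); and (ii) if x,y ∈ U2 with xy ∈ E(H) and z ∈ U1, then xz ∈ E(H) iff yz ∈ E(H). -/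
open SimpleGraph

/-- If no induced `P₄` of `H` contains the vertex `b`, then non-adjacent pairs in
`N(b)` and adjacent pairs outside `N(b) ∪ {b}` have identical adjacency to the
other side. -/
theorem statement10 {V : Type*} (H : SimpleGraph V) (b : V)
    (hb : ¬ ∃ p q r s : V, IsInducedP4 H p q r s ∧ b ∈ ({p, q, r, s} : Set V)) :
    (∀ x y z : V, x ∈ H.neighborSet b → y ∈ H.neighborSet b →
      ¬ H.Adj x y → z ∉ H.neighborSet b → z ≠ b → x ≠ y →
      (H.Adj x z ↔ H.Adj y z)) ∧
    (∀ x y z : V, x ∉ H.neighborSet b → y ∉ H.neighborSet b → x ≠ b → y ≠ b →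
      H.Adj x y → z ∈ H.neighborSet b →
      (H.Adj x z ↔ H.Adj y z)) := by
  constructor
  · -- part (i)
    have key : ∀ x y z : V, x ∈ H.neighborSet b → y ∈ H.neighborSet b →
        ¬ H.Adj x y → z ∉ H.neighborSet b → z ≠ b → x ≠ y →
        H.Adj x z → H.Adj y z := by
      intro x y z hx hy hxy hz hzb hxyne hxz
      by_contra hyz
      simp only [mem_neighborSet] at hx hy hz
      -- path z - x - b - y
      refine hb ⟨z, x, b, y, ⟨?_, hzb, ?_, ?_, hxyne, ?_, H.adj_symm hxz, H.adj_symm hx, hy,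
        fun h => hz (H.adj_symm h), fun h => hyz (H.adj_symm h), hxy⟩, by simp⟩
      · exact (H.ne_of_adj hxz).symm
      · exact fun h => hxy (h ▸ hxz)
      · intro h; subst h; exact H.irrefl hx
      · intro h; subst h; exact H.irrefl hy
    intro x y z hx hy hxy hz hzb hxyne
    exact ⟨key x y z hx hy hxy hz hzb hxyne,
      key y x z hy hx (fun h => hxy (H.adj_symm h)) hz hzb hxyne.symm⟩
  · -- part (ii)
    have key : ∀ x y z : V, x ∉ H.neighborSet b → y ∉ H.neighborSet b →
        x ≠ b → y ≠ b → H.Adj x y → z ∈ H.neighborSet b →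
        H.Adj x z → H.Adj y z := by
      intro x y z hx hy hxb hyb hxy hz hxz
      by_contra hyz
      simp only [mem_neighborSet] at hx hy hz
      -- path y - x - z - b
      refine hb ⟨y, x, z, b, ⟨(H.ne_of_adj hxy).symm, ?_, hyb, H.ne_of_adj hxz, hxb,
        H.ne_of_adj (H.adj_symm hz), H.adj_symm hxy, hxz, H.adj_symm hz,
        fun h => hyz h, fun h => hy (H.adj_symm h), fun h => hx (H.adj_symm h)⟩, by simp⟩
      exact fun h => hy (by rw [h]; exact hz)
    intro x y z hx hy hxb hyb hxy hz
    exact ⟨key x y z hx hy hxb hyb hxy hz,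
      key y x z hy hx hyb hxb (H.adj_symm hxy) hz⟩
end

section
/- Let H be a graph, b a vertex contained in no induced P4 of H, U1 = N_H(b), and suppose {u,w,x,y} ⊆ V(H) \ {b} induces a path u-w-x-y in H. Then {u,w,x,y} ∩ U1 is one of ∅, {w,x}, or {u,w,x,y}. -/
open SimpleGraph

/-- If no induced `P₄` of `H` contains `b` and `u-w-x-y` is an induced path avoiding
`b`, then `{u,w,x,y} ∩ N(b)` is `∅`, `{w,x}`, or `{u,w,x,y}`. -/
theorem statement11 {V : Type*} (H : SimpleGraph V) (b : V)
    (hb : ¬ ∃ p q r s : V, IsInducedP4 H p q r s ∧ b ∈ ({p, q, r, s} : Set V))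
    (u w x y : V) (hu : u ≠ b) (hw : w ≠ b) (hx : x ≠ b) (hy : y ≠ b)
    (hpath : IsInducedP4 H u w x y) :
    ({u, w, x, y} : Set V) ∩ H.neighborSet b ∈
      ({∅, {w, x}, {u, w, x, y}} : Set (Set V)) := by
  obtain ⟨huw, hux, huy, hwx, hwy, hxy, auw, awx, axy, nux, nuy, nwy⟩ := hpath
  by_cases hbu : H.Adj b u <;> by_cases hbw : H.Adj b w <;>
    by_cases hbx : H.Adj b x <;> by_cases hby : H.Adj b y
  -- TTTT : all
  · refine Or.inr (Or.inr ?_)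
    ext z
    simp only [Set.mem_inter_iff, mem_neighborSet, Set.mem_insert_iff,
      Set.mem_singleton_iff]
    constructor
    · exact fun h => h.1
    · rintro (rfl | rfl | rfl | rfl) <;> simp_all
  -- TTTF : P4 y-x-b-u
  · exact absurd ⟨y, x, b, u, ⟨hxy.symm, hy, huy.symm, hx, hux.symm, hu.symm,
      axy.symm, hbx.symm, hbu, (fun h => hby h.symm), (fun h => nuy h.symm),
      (fun h => nux h.symm)⟩, by simp⟩ hb
  -- TTFT : P4 x-y-b-u
  · exact absurd ⟨x, y, b, u, ⟨hxy, hx, hux.symm, hy, huy.symm, hu.symm,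
      axy, hby.symm, hbu, (fun h => hbx h.symm), (fun h => nux h.symm),
      (fun h => nuy h.symm)⟩, by simp⟩ hb
  -- TTFF : P4 b-w-x-y
  · exact absurd ⟨b, w, x, y, ⟨hw.symm, hx.symm, hy.symm, hwx, hwy, hxy,
      hbw, awx, axy, hbx, hby, nwy⟩, by simp⟩ hb
  -- TFTT : P4 w-u-b-y
  · exact absurd ⟨w, u, b, y, ⟨huw.symm, hw, hwy, hu, huy, hy.symm,
      auw.symm, hbu.symm, hby, (fun h => hbw h.symm), nwy, nuy⟩, by simp⟩ hb
  -- TFTF : P4 u-b-x-y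
  · exact absurd ⟨u, b, x, y, ⟨hu, hux, huy, hx.symm, hy.symm, hxy,
      hbu.symm, hbx, axy, nux, nuy, hby⟩, by simp⟩ hb
  -- TFFT : P4 u-b-y-x
  · exact absurd ⟨u, b, y, x, ⟨hu, huy, hux, hy.symm, hx.symm, hxy.symm,
      hbu.symm, hby, axy.symm, nuy, nux, hbx⟩, by simp⟩ hb
  -- TFFF : P4 b-u-w-x
  · exact absurd ⟨b, u, w, x, ⟨hu.symm, hw.symm, hx.symm, huw, hux, hwx,
      hbu, auw, awx, hbw, hbx, nux⟩, by simp⟩ hb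
  -- FTTT : P4 u-w-b-y
  · exact absurd ⟨u, w, b, y, ⟨huw, hu, huy, hw, hwy, hy.symm,
      auw, hbw.symm, hby, (fun h => hbu h.symm), nuy, nwy⟩, by simp⟩ hb
  -- FTTF : {w, x}
  · refine Or.inr (Or.inl ?_)
    ext z
    simp only [Set.mem_inter_iff, mem_neighborSet, Set.mem_insert_iff,
      Set.mem_singleton_iff]
    constructor
    · rintro ⟨rfl | rfl | rfl | rfl, hz⟩ <;> tauto
    · rintro (rfl | rfl) <;> tauto
  -- FTFT : P4 u-w-b-y
  · exact absurd ⟨u, w, b, y, ⟨huw, hu, huy, hw, hwy, hy.symm,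
      auw, hbw.symm, hby, (fun h => hbu h.symm), nuy, nwy⟩, by simp⟩ hb
  -- FTFF : P4 b-w-x-y
  · exact absurd ⟨b, w, x, y, ⟨hw.symm, hx.symm, hy.symm, hwx, hwy, hxy,
      hbw, awx, axy, hbx, hby, nwy⟩, by simp⟩ hb
  -- FFTT : P4 u-w-x-b
  · exact absurd ⟨u, w, x, b, ⟨huw, hux, hu, hwx, hw, hx,
      auw, awx, hbx.symm, nux, (fun h => hbu h.symm), (fun h => hbw h.symm)⟩,
      by simp⟩ hb
  -- FFTF : P4 b-x-w-u
  · exact absurd ⟨b, x, w, u, ⟨hx.symm, hw.symm, hu.symm, hwx.symm, hux.symm,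
      huw.symm, hbx, awx.symm, auw.symm, hbw, hbu, (fun h => nux h.symm)⟩,
      by simp⟩ hb
  -- FFFT : P4 b-y-x-w
  · exact absurd ⟨b, y, x, w, ⟨hy.symm, hx.symm, hw.symm, hxy.symm, hwy.symm,
      hwx.symm, hby, axy.symm, awx.symm, hbx, hbw, (fun h => nwy h.symm)⟩,
      by simp⟩ hb
  -- FFFF : empty
  · refine Or.inl ?_
    ext z
    simp only [Set.mem_inter_iff, mem_neighborSet, Set.mem_insert_iff,
      Set.mem_singleton_iff, Set.mem_empty_iff_false, iff_false, not_and]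
    rintro (rfl | rfl | rfl | rfl) <;> tauto
end

section
/- Let σ be a permutation of {1,...,n} with σ(1)=1, and let H be its inversion graph restricted to {2,...,n} (x<y adjacent iff σ(x)>σ(y)). Suppose x-y-z-w is an induced path in H with x in the interval between 1 and y and σ(y) < σ(x). Then either (Case 1) z lies between 1 and x, σ(z) lies strictly between σ(y) and σ(x), and w lies between z and x with σ(w) < σ(y); or (Case 2) z lies between x and y with σ(z) > σ(x), and w > y with σ(x) < σ(w) < σ(z). -/
/-- Case analysis for an induced path `x-y-z-w` in the inversion graph of a
permutation fixing `0` (restricted to nonzero indices), where `x < y` and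
`σ y < σ x`: either Case 1 or Case 2 of the proof of the key lemma occurs. -/
theorem statement16 (n : ℕ) [NeZero n] (σ : Equiv.Perm (Fin n)) (h0 : σ 0 = 0)
    (x y z w : Fin n)
    (hx0 : x ≠ 0) (hy0 : y ≠ 0) (hz0 : z ≠ 0) (hw0 : w ≠ 0)
    (hxy : x ≠ y) (hxz : x ≠ z) (hxw : x ≠ w) (hyz : y ≠ z) (hyw : y ≠ w)
    (hzw : z ≠ w)
    (p1 : invAdj n σ x y) (p2 : invAdj n σ y z) (p3 : invAdj n σ z w)
    (n1 : ¬ invAdj n σ x z) (n2 : ¬ invAdj n σ x w) (n3 : ¬ invAdj n σ y w)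
    (hlt : x < y) (hσ : σ y < σ x) :
    (z < x ∧ σ y < σ z ∧ σ z < σ x ∧ z < w ∧ w < x ∧ σ w < σ y) ∨
    (x < z ∧ z < y ∧ σ x < σ z ∧ y < w ∧ σ x < σ w ∧ σ w < σ z) := by
  have inj : ∀ a b : Fin n, a ≠ b → σ a ≠ σ b := fun a b h => fun e => h (σ.injective e)
  have sxy := inj _ _ hxy; have sxz := inj _ _ hxz; have sxw := inj _ _ hxw
  have syz := inj _ _ hyz; have syw := inj _ _ hyw; have szw := inj _ _ hzw
  simp only [invAdj, Fin.lt_def, not_or, not_and, not_lt, ← Fin.val_ne_iff] at *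
  omega
end

section
/- Let σ be a permutation of {1,...,n} with σ(1) = 1, n ≥ 4, and suppose that the inversion graph of σ restricted to {2,...,n} has no pair of twin vertices. Then σ contains one of the patterns 2413 or 3142 among entries with index ≥ 2. -/
/-- `σ` contains the pattern given by `τ : Fin 4 → Fin 4`. -/
def ContainsPattern (n : ℕ) (σ : Equiv.Perm (Fin n)) (τ : Fin 4 → Fin 4) : Prop :=
  ∃ f : Fin 4 → Fin n, StrictMono f ∧ ∀ i j : Fin 4, τ i < τ j ↔ σ (f i) < σ (f j)

/-- The pattern 2413 (0-indexed as 1,3,0,2). -/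
def pat2413 : Fin 4 → Fin 4 := ![1, 3, 0, 2]

/-- The pattern 3142 (0-indexed as 2,0,3,1). -/
def pat3142 : Fin 4 → Fin 4 := ![2, 0, 3, 1]


set_option linter.unusedSectionVars false
section GraphLemmas
variable {V : Type*} [DecidableEq V]

def HasP4 (G : V → V → Prop) (s : Finset V) : Prop :=
  ∃ a b c d : V, a ∈ s ∧ b ∈ s ∧ c ∈ s ∧ d ∈ s ∧
    a ≠ b ∧ a ≠ c ∧ a ≠ d ∧ b ≠ c ∧ b ≠ d ∧ c ≠ d ∧
    G a b ∧ G b c ∧ G c d ∧ ¬ G a c ∧ ¬ G a d ∧ ¬ G b d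

def HasTwins (G : V → V → Prop) (s : Finset V) : Prop :=
  ∃ x ∈ s, ∃ y ∈ s, x ≠ y ∧ ∀ z ∈ s, z ≠ x → z ≠ y → (G x z ↔ G y z)

def Split (G : V → V → Prop) (s : Finset V) : Prop :=
  ∃ A : Finset V, A ⊆ s ∧ A.Nonempty ∧ A ≠ s ∧ ∀ a ∈ A, ∀ b ∈ s, b ∉ A → ¬ G a b

lemma hasP4_mono {G : V → V → Prop} {s t : Finset V} (hst : s ⊆ t) (h : HasP4 G s) :
    HasP4 G t := by
  obtain ⟨a, b, c, d, ha, hb, hc, hd, h1⟩ := h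
  exact ⟨a, b, c, d, hst ha, hst hb, hst hc, hst hd, h1⟩

lemma hasP4_compl {G : V → V → Prop} (hsym : Symmetric G) {s : Finset V}
    (h : HasP4 (fun x y => ¬ G x y) s) : HasP4 G s := by
  obtain ⟨a, b, c, d, ha, hb, hc, hd, hab, hac, had, hbc, hbd, hcd,
    eab, ebc, ecd, eac, ead, ebd⟩ := h
  refine ⟨c, a, d, b, hc, ha, hd, hb, hac.symm, hcd, hbc.symm, had, hab, hbd.symm,
    hsym (not_not.mp eac), not_not.mp ead, hsym (not_not.mp ebd),
    ecd, fun h => ebc (hsym h), eab⟩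

lemma split_of_imp {G G' : V → V → Prop} {s : Finset V}
    (himp : ∀ x y, G' x y → G x y) (h : Split G s) : Split G' s := by
  obtain ⟨A, h1, h2, h3, h4⟩ := h
  exact ⟨A, h1, h2, h3, fun a ha b hb hb' hg => h4 a ha b hb hb' (himp a b hg)⟩

lemma seinsche_extend {G : V → V → Prop} (hsym : Symmetric G) {s : Finset V}
    (h4 : ¬ HasP4 G s) {v : V} (hv : v ∈ s) (hsplit : Split G (s.erase v)) :
    Split G s ∨ Split (fun x y => ¬ G x y) s := by
  classical
  set t := s.erase v with ht
  have hts : t ⊆ s := Finset.erase_subset v s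
  have hvt : v ∉ t := Finset.notMem_erase v s
  set Conn : V → V → Prop :=
    fun x z => Relation.ReflTransGen (fun u w => u ∈ t ∧ w ∈ t ∧ G u w) x z with hConn
  have conn_symm : ∀ {x z}, Conn x z → Conn z x := by
    intro x z h
    exact (@Relation.ReflTransGen.symmetric _ _ ⟨fun u w h => ⟨h.2.1, h.1, hsym h.2.2⟩⟩).symm _ _ h
  have conn_mem : ∀ {x z}, x ∈ t → Conn x z → z ∈ t := by
    intro x z hx h
    induction h with
    | refl => exact hx
    | tail _ h ih => exact h.2.1
  -- t is disconnected
  obtain ⟨A, hAt, ⟨x0, hx0⟩, hAne, hcross⟩ := hsplit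
  obtain ⟨y0, hy0t, hy0A⟩ : ∃ y0 ∈ t, y0 ∉ A := by
    by_contra h
    push_neg at h
    exact hAne (Finset.Subset.antisymm hAt h)
  have hconn0 : ¬ Conn x0 y0 := by
    intro h
    have : ∀ z, Conn x0 z → z ∈ A := by
      intro z hz
      induction hz with
      | refl => exact hx0
      | tail _ hstep ih => exact by_contra fun hzA => hcross _ ih _ hstep.2.1 hzA hstep.2.2
    exact hy0A (this y0 h)
  by_cases h1 : ∃ x ∈ t, ∀ u ∈ t, Conn x u → ¬ G v u
  · obtain ⟨x, hxt, hx⟩ := h1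
    left
    refine ⟨t.filter (Conn x), fun a ha => hts (Finset.mem_filter.mp ha).1,
      ⟨x, Finset.mem_filter.mpr ⟨hxt, Relation.ReflTransGen.refl⟩⟩, ?_, ?_⟩
    · intro h
      have : v ∈ t.filter (Conn x) := h ▸ hv
      exact hvt (Finset.mem_filter.mp this).1
    · intro a ha b hb hbK
      obtain ⟨hat, hxa⟩ := Finset.mem_filter.mp ha
      by_cases hbv : b = v
      · subst hbv; exact fun hG => hx a hat hxa (hsym hG)
      · have hbt : b ∈ t := Finset.mem_erase.mpr ⟨hbv, hb⟩
        intro hG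
        exact hbK (Finset.mem_filter.mpr ⟨hbt, hxa.tail ⟨hat, hbt, hG⟩⟩)
  · push_neg at h1
    by_cases h2 : ∀ x ∈ t, G v x
    · right
      refine ⟨{v}, Finset.singleton_subset_iff.mpr hv, Finset.singleton_nonempty v, ?_, ?_⟩
      · intro h
        have : x0 ∈ ({v} : Finset V) := h ▸ hts (hAt hx0)
        exact hvt (Finset.mem_singleton.mp this ▸ hAt hx0)
      · intro a ha b hb hbv
        rw [Finset.mem_singleton] at ha hbv
        subst ha
        exact not_not.mpr (h2 b (Finset.mem_erase.mpr ⟨fun h => hbv (h ▸ rfl), hb⟩))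
    · push_neg at h2
      obtain ⟨x, hxt, hvx⟩ := h2
      obtain ⟨u, hut, hxu, hvu⟩ := h1 x hxt
      -- walk from u to x, find adjacent pair a ~ a' with G v a, ¬ G v a'
      have walk : ∀ p q : V, Conn p q → G v p → ¬ G v q →
          ∃ a a', a ∈ t ∧ a' ∈ t ∧ G a a' ∧ G v a ∧ ¬ G v a' := by
        intro p q hpq
        induction hpq using Relation.ReflTransGen.head_induction_on with
        | refl => exact fun h1 h2 => absurd h1 h2
        | @head p' w' hstep htail ih =>
          intro hvp hvq
          by_cases hvw : G v w'
          · exact ih hvw hvq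
          · exact ⟨p', w', hstep.1, hstep.2.1, hstep.2.2, hvp, hvw⟩
      obtain ⟨a, a', hat, ha't, haa', hva, hva'⟩ := walk u x (conn_symm hxu) hvu hvx
      -- v has a neighbor in the component of x0 and of y0
      obtain ⟨u0, hu0t, hx0u0, hvu0⟩ := h1 x0 (hAt hx0)
      obtain ⟨u1, hu1t, hy0u1, hvu1⟩ := h1 y0 hy0t
      have hkey : ¬ Conn a u0 ∨ ¬ Conn a u1 := by
        by_contra h
        push_neg at h
        exact hconn0 ((hx0u0.trans (conn_symm h.1)).trans (h.2.trans (conn_symm hy0u1)))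
      obtain ⟨b, hbt, hvb, hab⟩ : ∃ b, b ∈ t ∧ G v b ∧ ¬ Conn a b := by
        rcases hkey with h | h
        · exact ⟨u0, hu0t, hvu0, h⟩
        · exact ⟨u1, hu1t, hvu1, h⟩
      have hGab : ¬ G a b := fun h => hab (Relation.ReflTransGen.single ⟨hat, hbt, h⟩)
      have hGa'b : ¬ G a' b := fun h =>
        hab ((Relation.ReflTransGen.single ⟨hat, ha't, haa'⟩).tail ⟨ha't, hbt, h⟩)
      exfalso
      apply h4
      refine ⟨a', a, v, b, hts ha't, hts hat, hv, hts hbt, ?_, ?_, ?_, ?_, ?_, ?_,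
        hsym haa', hsym hva, hvb, fun h => hva' (hsym h), hGa'b, hGab⟩
      · exact fun h => hva' (by rw [h]; exact hva)
      · exact fun h => hvt (by rw [← h]; exact ha't)
      · exact fun h => hva' (by rw [h]; exact hvb)
      · exact fun h => hvt (by rw [← h]; exact hat)
      · exact fun h => hab (by rw [h])
      · exact fun h => hvt (by rw [h]; exact hbt)
lemma seinsche_s19 : ∀ (k : ℕ) (G : V → V → Prop), Symmetric G → ∀ s : Finset V,
    s.card ≤ k → 2 ≤ s.card → ¬ HasP4 G s →
    Split G s ∨ Split (fun x y => ¬ G x y) s := by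
  intro k
  induction k with
  | zero => intro G _ s h1 h2 _; omega
  | succ k ih =>
    intro G hsym s hk h2 h4
    by_cases hcard : s.card = 2
    · obtain ⟨x, y, hxy, rfl⟩ := Finset.card_eq_two.mp hcard
      have hx : x ∈ ({x, y} : Finset V) := Finset.mem_insert_self x {y}
      have hy : y ∈ ({x, y} : Finset V) := Finset.mem_insert_of_mem (Finset.mem_singleton_self y)
      have hne : ({x} : Finset V) ≠ {x, y} := by
        intro h
        have : y ∈ ({x} : Finset V) := h ▸ hy
        exact hxy (Finset.mem_singleton.mp this).symm
      have hbeq : ∀ b ∈ ({x, y} : Finset V), b ∉ ({x} : Finset V) → b = y := by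
        intro b hb hbx
        rcases Finset.mem_insert.mp hb with h | h
        · exact absurd (Finset.mem_singleton.mpr h) hbx
        · exact Finset.mem_singleton.mp h
      by_cases hG : G x y
      · right
        refine ⟨{x}, Finset.singleton_subset_iff.mpr hx, Finset.singleton_nonempty x, hne, ?_⟩
        intro a ha b hb hbx
        rw [Finset.mem_singleton] at ha
        subst ha
        rw [hbeq b hb hbx]
        exact not_not.mpr hG
      · left
        refine ⟨{x}, Finset.singleton_subset_iff.mpr hx, Finset.singleton_nonempty x, hne, ?_⟩
        intro a ha b hb hbx
        rw [Finset.mem_singleton] at ha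
        subst ha
        rw [hbeq b hb hbx]
        exact hG
    · have h3 : 3 ≤ s.card := by omega
      obtain ⟨v, hv⟩ := Finset.card_pos.mp (show 0 < s.card by omega)
      have hct : (s.erase v).card = s.card - 1 := Finset.card_erase_of_mem hv
      have h4t : ¬ HasP4 G (s.erase v) := fun h => h4 (hasP4_mono (Finset.erase_subset v s) h)
      rcases ih G hsym (s.erase v) (by omega) (by omega) h4t with hs | hs
      · exact seinsche_extend hsym h4 hv hs
      · have hsymc : Symmetric (fun x y => ¬ G x y) := fun a b h hg => h (hsym hg)
        have h4c : ¬ HasP4 (fun x y => ¬ G x y) s := fun h => h4 (hasP4_compl hsym h)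
        rcases seinsche_extend hsymc h4c hv hs with h | h
        · right; exact h
        · left; exact split_of_imp (fun x y hg => not_not.mpr hg) h

lemma twins_of_split {G : V → V → Prop} (hsym : Symmetric G) {s : Finset V}
    (hsplit : Split G s) (h4 : ¬ HasP4 G s)
    (ih : ∀ t : Finset V, t ⊆ s → t.card < s.card → 2 ≤ t.card → ¬ HasP4 G t → HasTwins G t)
    (h3 : 3 ≤ s.card) : HasTwins G s := by
  obtain ⟨A, hAs, hAne, hAneq, hcross⟩ := hsplit
  have hAlt : A.card < s.card := Finset.card_lt_card (hAs.ssubset_of_ne hAneq)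
  have hcardB : (s \ A).card = s.card - A.card := Finset.card_sdiff_of_subset hAs
  by_cases hA2 : 2 ≤ A.card
  · obtain ⟨x, hx, y, hy, hxy, htw⟩ :=
      ih A hAs hAlt hA2 (fun h => h4 (hasP4_mono hAs h))
    refine ⟨x, hAs hx, y, hAs hy, hxy, ?_⟩
    intro z hz hzx hzy
    by_cases hzA : z ∈ A
    · exact htw z hzA hzx hzy
    · exact iff_of_false (hcross x hx z hz hzA) (hcross y hy z hz hzA)
  · have hA1 : A.card = 1 := by
      rcases Finset.card_pos.mpr hAne with h
      omega
    have hB2 : 2 ≤ (s \ A).card := by omega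
    have hBs : s \ A ⊆ s := Finset.sdiff_subset
    have hBlt : (s \ A).card < s.card := by
      have := Finset.card_pos.mpr hAne
      omega
    obtain ⟨x, hx, y, hy, hxy, htw⟩ :=
      ih (s \ A) hBs hBlt hB2 (fun h => h4 (hasP4_mono hBs h))
    refine ⟨x, hBs hx, y, hBs hy, hxy, ?_⟩
    intro z hz hzx hzy
    by_cases hzB : z ∈ s \ A
    · exact htw z hzB hzx hzy
    · have hzA : z ∈ A := by
        rcases Finset.mem_sdiff.not.mp hzB with h
        by_contra hzA'
        exact h ⟨hz, hzA'⟩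
      have hxA : x ∉ A := (Finset.mem_sdiff.mp hx).2
      have hyA : y ∉ A := (Finset.mem_sdiff.mp hy).2
      exact iff_of_false (fun hg => hcross z hzA x (hBs hx) hxA (hsym hg))
        (fun hg => hcross z hzA y (hBs hy) hyA (hsym hg))

lemma twins_main : ∀ (k : ℕ) (G : V → V → Prop), Symmetric G → ∀ s : Finset V,
    s.card ≤ k → 2 ≤ s.card → ¬ HasP4 G s → HasTwins G s := by
  intro k
  induction k with
  | zero => intro G _ s h1 h2 _; omega
  | succ k ih =>
    intro G hsym s hk h2 h4
    by_cases hcard : s.card = 2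
    · obtain ⟨x, y, hxy, rfl⟩ := Finset.card_eq_two.mp hcard
      refine ⟨x, Finset.mem_insert_self x {y}, y,
        Finset.mem_insert_of_mem (Finset.mem_singleton_self y), hxy, ?_⟩
      intro z hz hzx hzy
      rcases Finset.mem_insert.mp hz with h | h
      · exact absurd h hzx
      · exact absurd (Finset.mem_singleton.mp h) hzy
    · have h3 : 3 ≤ s.card := by omega
      rcases seinsche_s19 (k+1) G hsym s hk h2 h4 with hs | hs
      · exact twins_of_split hsym hs h4
          (fun t hts hlt h2t h4t => ih G hsym t (by omega) h2t h4t) h3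
      · have hsymc : Symmetric (fun x y => ¬ G x y) := fun a b h hg => h (hsym hg)
        have h4c : ¬ HasP4 (fun x y => ¬ G x y) s := fun h => h4 (hasP4_compl hsym h)
        obtain ⟨x, hx, y, hy, hxy, htw⟩ :=
          twins_of_split hsymc hs h4c
            (fun t hts hlt h2t h4t => ih _ hsymc t (by omega) h2t h4t) h3
        exact ⟨x, hx, y, hy, hxy, fun z hz h1' h2' => not_iff_not.mp (htw z hz h1' h2')⟩


end GraphLemmas

def Efun (τ : Fin 4 → Fin 4) (i j : Fin 4) : Prop :=
  (i < j ∧ τ j < τ i) ∨ (j < i ∧ τ i < τ j)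

instance (τ : Fin 4 → Fin 4) (i j : Fin 4) : Decidable (Efun τ i j) := by
  unfold Efun; infer_instance

set_option maxRecDepth 100000 in
set_option maxHeartbeats 10000000 in
lemma core : ∀ (τ : Fin 4 → Fin 4) (a b c d : Fin 4),
    ((∀ i j, τ i = τ j → i = j) ∧ a ≠ b ∧ a ≠ c ∧ a ≠ d ∧ b ≠ c ∧ b ≠ d ∧ c ≠ d ∧
    Efun τ a b ∧ Efun τ b c ∧ Efun τ c d ∧ ¬Efun τ a c ∧ ¬Efun τ a d ∧ ¬Efun τ b d) →
    ((∀ i j, pat2413 i < pat2413 j ↔ τ i < τ j) ∨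
     (∀ i j, pat3142 i < pat3142 j ↔ τ i < τ j)) := by decide

lemma invAdj_symm (n : ℕ) (σ : Equiv.Perm (Fin n)) : Symmetric (invAdj n σ) :=
  fun _ _ h => h.elim Or.inr Or.inl

set_option maxHeartbeats 1000000 in
/-- If `σ` fixes `0`, `n ≥ 4`, and the inversion graph of `σ` restricted to the
nonzero indices has no pair of twins, then `σ` contains the pattern 2413 or 3142
among the nonzero indices. -/
theorem statement19 (n : ℕ) [NeZero n] (hn : 4 ≤ n) (σ : Equiv.Perm (Fin n))
    (h0 : σ 0 = 0)
    (htf : ¬ ∃ x y : Fin n, x ≠ 0 ∧ y ≠ 0 ∧ x ≠ y ∧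
      ∀ z : Fin n, z ≠ 0 → z ≠ x → z ≠ y → (invAdj n σ x z ↔ invAdj n σ y z)) :
    (∃ f : Fin 4 → Fin n, StrictMono f ∧ (∀ i, f i ≠ 0) ∧
      ∀ i j : Fin 4, pat2413 i < pat2413 j ↔ σ (f i) < σ (f j)) ∨
    (∃ f : Fin 4 → Fin n, StrictMono f ∧ (∀ i, f i ≠ 0) ∧
      ∀ i j : Fin 4, pat3142 i < pat3142 j ↔ σ (f i) < σ (f j)) := by
  classical
  set G := invAdj n σ with hG
  have hsym : Symmetric G := invAdj_symm n σ
  set s : Finset (Fin n) := Finset.univ.erase 0 with hs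
  have hcard : s.card = n - 1 := by
    rw [hs, Finset.card_erase_of_mem (Finset.mem_univ 0), Finset.card_univ, Fintype.card_fin]
  by_cases h4 : HasP4 G s
  · -- extract the P4 and produce the pattern
    obtain ⟨a, b, c, d, ha, hb, hc, hd, hab, hac, had, hbc, hbd, hcd,
      eab, ebc, ecd, eac, ead, ebd⟩ := h4
    set T : Finset (Fin n) := {a, b, c, d} with hTdef
    have hT : T.card = 4 := by
      rw [hTdef,
        Finset.card_insert_of_notMem (by simp [hab, hac, had]),
        Finset.card_insert_of_notMem (by simp [hbc, hbd]),
        Finset.card_insert_of_notMem (by simp [hcd]),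
        Finset.card_singleton]
    have hTs : T ⊆ s := by
      rw [hTdef]
      intro x hx
      rcases Finset.mem_insert.mp hx with h | hx
      · exact h ▸ ha
      rcases Finset.mem_insert.mp hx with h | hx
      · exact h ▸ hb
      rcases Finset.mem_insert.mp hx with h | hx
      · exact h ▸ hc
      · exact (Finset.mem_singleton.mp hx) ▸ hd
    set e := T.orderIsoOfFin hT with he
    set f : Fin 4 → Fin n := fun i => (e i : Fin n) with hf
    have hmono : StrictMono f := fun i j h => Subtype.coe_lt_coe.mpr (e.strictMono h)
    have hfmem : ∀ i, f i ∈ T := fun i => (e i).2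
    have hf0 : ∀ i, f i ≠ 0 := fun i => (Finset.mem_erase.mp (hTs (hfmem i))).1
    -- the rank function τ
    set U : Finset (Fin n) := T.image σ with hU
    have hUcard : U.card = 4 := by
      rw [hU, Finset.card_image_of_injective T σ.injective, hT]
    set g := U.orderIsoOfFin hUcard with hg
    set τ : Fin 4 → Fin 4 :=
      fun i => g.symm ⟨σ (f i), Finset.mem_image_of_mem σ (hfmem i)⟩ with hτ
    have hτlt : ∀ i j, τ i < τ j ↔ σ (f i) < σ (f j) := by
      intro i j
      rw [hτ]
      rw [g.symm.lt_iff_lt]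
      exact Subtype.mk_lt_mk
    have hτinj : ∀ i j, τ i = τ j → i = j := by
      intro i j h
      have h2 : σ (f i) = σ (f j) := by
        have := g.symm.injective h
        exact congrArg Subtype.val this
      exact hmono.injective (σ.injective h2)
    have hE : ∀ i j, G (f i) (f j) ↔ Efun τ i j := by
      intro i j
      rw [hG]
      unfold invAdj Efun
      rw [hmono.lt_iff_lt, hmono.lt_iff_lt, hτlt, hτlt]
    -- indices of a b c d
    have haT : a ∈ T := by rw [hTdef]; simp
    have hbT : b ∈ T := by rw [hTdef]; simp
    have hcT : c ∈ T := by rw [hTdef]; simp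
    have hdT : d ∈ T := by rw [hTdef]; simp
    set ia := e.symm ⟨a, haT⟩ with hia
    set ib := e.symm ⟨b, hbT⟩ with hib
    set ic := e.symm ⟨c, hcT⟩ with hic
    set idd := e.symm ⟨d, hdT⟩ with hidd
    have hfa : f ia = a := by rw [hf, hia]; exact congrArg Subtype.val (e.apply_symm_apply _)
    have hfb : f ib = b := by rw [hf, hib]; exact congrArg Subtype.val (e.apply_symm_apply _)
    have hfc : f ic = c := by rw [hf, hic]; exact congrArg Subtype.val (e.apply_symm_apply _)
    have hfd : f idd = d := by rw [hf, hidd]; exact congrArg Subtype.val (e.apply_symm_apply _)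
    have hne : ∀ {i j : Fin 4}, f i ≠ f j → i ≠ j := fun h hij => h (hij ▸ rfl)
    have rab : ia ≠ ib := hne (by rw [hfa, hfb]; exact hab)
    have rac : ia ≠ ic := hne (by rw [hfa, hfc]; exact hac)
    have rad : ia ≠ idd := hne (by rw [hfa, hfd]; exact had)
    have rbc : ib ≠ ic := hne (by rw [hfb, hfc]; exact hbc)
    have rbd : ib ≠ idd := hne (by rw [hfb, hfd]; exact hbd)
    have rcd : ic ≠ idd := hne (by rw [hfc, hfd]; exact hcd)
    have Eab : Efun τ ia ib := (hE ia ib).mp (by rw [hfa, hfb]; exact eab)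
    have Ebc : Efun τ ib ic := (hE ib ic).mp (by rw [hfb, hfc]; exact ebc)
    have Ecd : Efun τ ic idd := (hE ic idd).mp (by rw [hfc, hfd]; exact ecd)
    have Eac : ¬ Efun τ ia ic := fun h => eac (by rw [← hfa, ← hfc]; exact (hE ia ic).mpr h)
    have Ead : ¬ Efun τ ia idd := fun h => ead (by rw [← hfa, ← hfd]; exact (hE ia idd).mpr h)
    have Ebd : ¬ Efun τ ib idd := fun h => ebd (by rw [← hfb, ← hfd]; exact (hE ib idd).mpr h)
    rcases core τ ia ib ic idd ⟨hτinj, rab, rac, rad, rbc, rbd, rcd,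
      Eab, Ebc, Ecd, Eac, Ead, Ebd⟩ with hpat | hpat
    · exact Or.inl ⟨f, hmono, hf0, fun i j => (hpat i j).trans (hτlt i j)⟩
    · exact Or.inr ⟨f, hmono, hf0, fun i j => (hpat i j).trans (hτlt i j)⟩
  · -- no P4: get twins, contradiction
    exfalso
    have h2 : 2 ≤ s.card := by omega
    obtain ⟨x, hx, y, hy, hxy, htw⟩ := twins_main s.card G hsym s le_rfl h2 h4
    refine htf ⟨x, y, (Finset.mem_erase.mp hx).1, (Finset.mem_erase.mp hy).1, hxy, ?_⟩
    intro z hz hzx hzy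
    exact htw z (Finset.mem_erase.mpr ⟨hz, Finset.mem_univ z⟩) hzx hzy
end
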